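/- The subgroup of GL₂(ℤ) generated by −I, S₁, S₂, S₃ is isomorphic to (ℤ/2ℤ) × 𝔖₃: there is an injective group homomorphism from (ℤ/2ℤ) × 𝔖₃ (where 𝔖₃ is the symmetric group on {0,1,2}) into GL₂(ℤ) sending the generator of ℤ/2ℤ to −I and sending the transpositions (0 1), (1 2), (0 2) to S₁, S₂, S₃ respectively, whose image is exactly the subgroup generated by {−I, S₁, S₂, S₃}. -/
import Mathlib


/-- The matrix `S₁ = [[1,-1],[0,-1]]` as an element of `GL₂(ℤ)`. -/
def S₁ : GL (Fin 2) ℤ := ⟨!![1, -1; 0, -1], !![1, -1; 0, -1], by decide, by decide⟩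

/-- The matrix `S₂ = [[-1,0],[-1,1]]` as an element of `GL₂(ℤ)`. -/
def S₂ : GL (Fin 2) ℤ := ⟨!![-1, 0; -1, 1], !![-1, 0; -1, 1], by decide, by decide⟩

/-- The matrix `S₃ = [[0,1],[1,0]]` as an element of `GL₂(ℤ)`. -/
def S₃ : GL (Fin 2) ℤ := ⟨!![0, 1; 1, 0], !![0, 1; 1, 0], by decide, by decide⟩

/-- The matrix `J = [[-1,0],[0,1]]` as an element of `GL₂(ℤ)`. -/
def Jmat : GL (Fin 2) ℤ := ⟨!![-1, 0; 0, 1], !![-1, 0; 0, 1], by decide, by decide⟩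

/-- `SS k` is `Sₖ` for `k ∈ {1,2,3}` (junk value `1` otherwise). -/
def SS : ℕ → GL (Fin 2) ℤ
  | 1 => S₁
  | 2 => S₂
  | 3 => S₃
  | _ => 1

/-- `wordProd i n = S_{i 0} · J · S_{i 1} · J ⋯ S_{i (n-1)} · J · S_{i n}`,
the alternating word with `n` factors `J` and `n+1` factors `S`. -/
def wordProd (i : ℕ → ℕ) : ℕ → GL (Fin 2) ℤ
  | 0 => SS (i 0)
  | n + 1 => wordProd i n * Jmat * SS (i (n + 1))

/-- The vectors `v₀ = (0,1)`, `v₁ = (-1,-1)`, `v₂ = (1,0)` permuted by the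
`𝔖₃`-action. -/
def vv : Fin 3 → Fin 2 → ℤ
  | 0 => ![0, 1]
  | 1 => ![-1, -1]
  | 2 => ![1, 0]

/-- The matrix sending `vₖ` to `v_{σ k}` for each `k`. -/
def fmat (σ : Equiv.Perm (Fin 3)) : Matrix (Fin 2) (Fin 2) ℤ :=
  !![vv (σ 2) 0, vv (σ 0) 0; vv (σ 2) 1, vv (σ 0) 1]

theorem fmat_inv : ∀ σ, fmat σ * fmat σ⁻¹ = 1 ∧ fmat σ⁻¹ * fmat σ = 1 := by decide

/-- `fmat σ` as an element of `GL₂(ℤ)`. -/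
def fgl (σ : Equiv.Perm (Fin 3)) : GL (Fin 2) ℤ :=
  ⟨fmat σ, fmat σ⁻¹, (fmat_inv σ).1, (fmat_inv σ).2⟩

/-- The underlying function of the homomorphism `(ℤ/2ℤ) × 𝔖₃ → GL₂(ℤ)`. -/
def φfun (x : Multiplicative (ZMod 2) × Equiv.Perm (Fin 3)) : GL (Fin 2) ℤ :=
  (if x.1.toAdd = 0 then 1 else -1) * fgl x.2

/-- The homomorphism `(ℤ/2ℤ) × 𝔖₃ → GL₂(ℤ)`. -/
def φ0 : Multiplicative (ZMod 2) × Equiv.Perm (Fin 3) →* GL (Fin 2) ℤ where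
  toFun := φfun
  map_one' := by decide
  map_mul' := by decide

theorem fgl_cases : ∀ σ, fgl σ = 1 ∨ fgl σ = S₁ ∨ fgl σ = S₂ ∨ fgl σ = S₃ ∨
    fgl σ = S₁ * S₂ ∨ fgl σ = S₂ * S₁ := by decide

theorem sign_cases : ∀ a : Multiplicative (ZMod 2),
    (if a.toAdd = 0 then (1 : GL (Fin 2) ℤ) else -1) = 1 ∨
    (if a.toAdd = 0 then (1 : GL (Fin 2) ℤ) else -1) = -1 := by decide

/-- The subgroup of `GL₂(ℤ)` generated by `-I, S₁, S₂, S₃` is isomorphic to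
`(ℤ/2ℤ) × 𝔖₃`: there is an injective group homomorphism
`(ℤ/2ℤ) × 𝔖₃ → GL₂(ℤ)` sending the generator of `ℤ/2ℤ` to `-I` and the
transpositions `(0 1)`, `(1 2)`, `(0 2)` to `S₁`, `S₂`, `S₃`, whose image is
exactly the subgroup generated by `{-I, S₁, S₂, S₃}`. -/
theorem stabilizer_subgroup_iso :
    ∃ φ : Multiplicative (ZMod 2) × Equiv.Perm (Fin 3) →* GL (Fin 2) ℤ,
      Function.Injective φ ∧
      φ (Multiplicative.ofAdd (1 : ZMod 2), 1) = -1 ∧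
      φ (1, Equiv.swap 0 1) = S₁ ∧
      φ (1, Equiv.swap 1 2) = S₂ ∧
      φ (1, Equiv.swap 0 2) = S₃ ∧
      φ.range = Subgroup.closure {(-1 : GL (Fin 2) ℤ), S₁, S₂, S₃} := by
  refine ⟨φ0, by decide, by decide, by decide, by decide, by decide, ?_⟩
  apply le_antisymm
  · rintro x ⟨⟨a, σ⟩, rfl⟩
    have hx : φ0 (a, σ) = (if a.toAdd = 0 then (1 : GL (Fin 2) ℤ) else -1) * fgl σ := rfl
    rw [hx]
    apply mul_mem
    · rcases sign_cases a with h | h <;> rw [h]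
      · exact one_mem _
      · exact Subgroup.subset_closure (by simp)
    · have hS₁ : S₁ ∈ Subgroup.closure {(-1 : GL (Fin 2) ℤ), S₁, S₂, S₃} :=
        Subgroup.subset_closure (by simp)
      have hS₂ : S₂ ∈ Subgroup.closure {(-1 : GL (Fin 2) ℤ), S₁, S₂, S₃} :=
        Subgroup.subset_closure (by simp)
      have hS₃ : S₃ ∈ Subgroup.closure {(-1 : GL (Fin 2) ℤ), S₁, S₂, S₃} :=
        Subgroup.subset_closure (by simp)
      rcases fgl_cases σ with h | h | h | h | h | h <;> rw [h]
      · exact one_mem _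
      · exact hS₁
      · exact hS₂
      · exact hS₃
      · exact mul_mem hS₁ hS₂
      · exact mul_mem hS₂ hS₁
  · rw [Subgroup.closure_le]
    rintro x (rfl | rfl | rfl | rfl)
    · exact ⟨(Multiplicative.ofAdd (1 : ZMod 2), 1), by decide⟩
    · exact ⟨(1, Equiv.swap 0 1), by decide⟩
    · exact ⟨(1, Equiv.swap 1 2), by decide⟩
    · exact ⟨(1, Equiv.swap 0 2), by decide⟩
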